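/- Let p ≥ 1 be an integer and let k_1,…,k_p, n ∈ ℕ with k_1+…+k_p ≤ n. Then Σ over all tuples (l_1,…,l_p) ∈ ℕ^p with l_i ≥ k_i for each i and l_1+…+l_p ≤ n of (−1)^{l_1+…+l_p} · (∏_{i=1}^{p} 1/(l_i−k_i)!) · n!/(n−(l_1+…+l_p))! equals (−1)^n · n! · (p−1)^{n−(k_1+…+k_p)} / (n−(k_1+…+k_p))!, with the convention 0^0 = 1. -/

import Mathlib

open Finset

lemma inner_eval (p s : ℕ) :
    ∑ m ∈ Finset.Nat.antidiagonalTuple p s,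
        ∏ i : Fin p, (1 : ℝ) / (Nat.factorial (m i) : ℝ)
      = (p : ℝ) ^ s / (Nat.factorial s : ℝ) := by
  have h := Finset.sum_pow_eq_sum_piAntidiag (univ : Finset (Fin p)) (fun _ => (1 : ℝ)) s
  rw [Finset.piAntidiag_univ_fin_eq_antidiagonalTuple s p] at h
  simp only [sum_const, card_univ, Fintype.card_fin, nsmul_eq_mul, mul_one, one_pow,
    prod_const_one] at h
  rw [eq_div_iff (by exact_mod_cast (Nat.factorial_pos s).ne')]
  rw [h, Finset.sum_mul]
  refine Finset.sum_congr rfl fun m hm => ?_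
  have hsum : ∑ i, m i = s := Finset.Nat.mem_antidiagonalTuple.mp hm
  have spec := Nat.multinomial_spec (univ : Finset (Fin p)) m
  rw [hsum] at spec
  have spec' : ((∏ i : Fin p, Nat.factorial (m i) : ℕ) : ℝ) *
      (Nat.multinomial univ m : ℝ) = (Nat.factorial s : ℝ) := by exact_mod_cast spec
  push_cast at spec' ⊢
  have hne : (∏ i : Fin p, (Nat.factorial (m i) : ℝ)) ≠ 0 :=
    Finset.prod_ne_zero_iff.mpr fun i _ => by exact_mod_cast (Nat.factorial_pos _).ne'
  rw [← spec', ← mul_assoc, ← Finset.prod_mul_distrib,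
    Finset.prod_congr rfl (fun i _ => one_div_mul_cancel
      (by exact_mod_cast (Nat.factorial_pos (m i)).ne' : ((Nat.factorial (m i) : ℝ)) ≠ 0)),
    Finset.prod_const_one, one_mul]

lemma reindex_eval (p : ℕ) (k : Fin p → ℕ) (t : ℕ) (ht : ∑ i, k i ≤ t) :
    ∑ l ∈ (Finset.Nat.antidiagonalTuple p t).filter (fun l => ∀ i, k i ≤ l i),
        ∏ i : Fin p, (1 : ℝ) / (Nat.factorial (l i - k i) : ℝ)
      = ∑ m ∈ Finset.Nat.antidiagonalTuple p (t - ∑ i, k i),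
        ∏ i : Fin p, (1 : ℝ) / (Nat.factorial (m i) : ℝ) := by
  refine Finset.sum_nbij' (i := fun l => fun i => l i - k i)
    (j := fun m => fun i => k i + m i) ?_ ?_ ?_ ?_ ?_
  · intro l hl
    rw [Finset.mem_filter, Finset.Nat.mem_antidiagonalTuple] at hl
    rw [Finset.Nat.mem_antidiagonalTuple]
    show ∑ i, (l i - k i) = t - ∑ i, k i
    rw [Finset.sum_tsub_distrib _ fun i _ => hl.2 i, hl.1]
  · intro m hm
    rw [Finset.Nat.mem_antidiagonalTuple] at hm
    rw [Finset.mem_filter, Finset.Nat.mem_antidiagonalTuple]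
    constructor
    · rw [Finset.sum_add_distrib, hm, Nat.add_sub_cancel' ht]
    · intro i; exact Nat.le_add_right _ _
  · intro l hl
    rw [Finset.mem_filter] at hl
    funext i
    exact Nat.add_sub_cancel' (hl.2 i)
  · intro m hm
    funext i
    exact Nat.add_sub_cancel_left _ _
  · intro l hl; rfl

/-- Closed-form evaluation of the combinatorial kernel `K_{n,k_1,…,k_p}` appearing in the
discretization of nonlinear ODEs. -/
theorem kernel_closed_form (p : ℕ) (hp : 1 ≤ p) (k : Fin p → ℕ) (n : ℕ)
    (hkn : ∑ i, k i ≤ n) :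
    ∑ t ∈ Finset.range (n + 1),
      ∑ l ∈ (Finset.Nat.antidiagonalTuple p t).filter (fun l => ∀ i, k i ≤ l i),
        (-1 : ℝ) ^ t * (∏ i : Fin p, (1 : ℝ) / (Nat.factorial (l i - k i) : ℝ)) *
          (Nat.factorial n : ℝ) / (Nat.factorial (n - t) : ℝ)
    = (-1 : ℝ) ^ n * (Nat.factorial n : ℝ) *
        ((p - 1 : ℕ) : ℝ) ^ (n - ∑ i, k i) / (Nat.factorial (n - ∑ i, k i) : ℝ) := by
  set K := ∑ i, k i with hK
  set N := n - K with hN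
  -- rewrite each inner sum
  have hinner : ∀ t ∈ Finset.range (n + 1),
      (∑ l ∈ (Finset.Nat.antidiagonalTuple p t).filter (fun l => ∀ i, k i ≤ l i),
        (-1 : ℝ) ^ t * (∏ i : Fin p, (1 : ℝ) / (Nat.factorial (l i - k i) : ℝ)) *
          (Nat.factorial n : ℝ) / (Nat.factorial (n - t) : ℝ))
      = if K ≤ t then
          (-1 : ℝ) ^ t * ((p : ℝ) ^ (t - K) / (Nat.factorial (t - K) : ℝ)) *
            (Nat.factorial n : ℝ) / (Nat.factorial (n - t) : ℝ)
        else 0 := by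
    intro t _
    by_cases hKt : K ≤ t
    · rw [if_pos hKt]
      have := reindex_eval p k t hKt
      rw [inner_eval] at this
      simp_rw [mul_div_assoc, ← Finset.sum_mul, ← Finset.mul_sum, this]
      rfl
    · rw [if_neg hKt]
      have hempty : (Finset.Nat.antidiagonalTuple p t).filter (fun l => ∀ i, k i ≤ l i) = ∅ := by
        rw [Finset.filter_eq_empty_iff]
        intro l hl hall
        rw [Finset.Nat.mem_antidiagonalTuple] at hl
        exact hKt (hl ▸ Finset.sum_le_sum fun i _ => hall i)
      rw [hempty, Finset.sum_empty]
  rw [Finset.sum_congr rfl hinner, Finset.sum_ite, Finset.sum_const_zero, add_zero]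
  have hfilter : (Finset.range (n + 1)).filter (fun t => K ≤ t) = Finset.Ico K (n + 1) := by
    ext t; simp [Finset.mem_filter, Finset.mem_Ico, Nat.lt_succ_iff, and_comm]
  rw [hfilter, Finset.sum_Ico_eq_sum_range]
  have hNn : n + 1 - K = N + 1 := by omega
  rw [hNn]
  -- now evaluate the single sum
  have hterm : ∀ s ∈ Finset.range (N + 1),
      ((-1 : ℝ) ^ (K + s) * ((p : ℝ) ^ (K + s - K) / (Nat.factorial (K + s - K) : ℝ)) *
        (Nat.factorial n : ℝ) / (Nat.factorial (n - (K + s)) : ℝ))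
      = (-1 : ℝ) ^ K * ((Nat.factorial n : ℝ) / (Nat.factorial N : ℝ)) *
          ((-(p : ℝ)) ^ s * (1 : ℝ) ^ (N - s) * (N.choose s : ℝ)) := by
    intro s hs
    rw [Finset.mem_range, Nat.lt_succ_iff] at hs
    have h1 : K + s - K = s := Nat.add_sub_cancel_left _ _
    have h2 : n - (K + s) = N - s := by omega
    rw [h1, h2]
    have hchoose : (N.choose s : ℝ) = (Nat.factorial N : ℝ) /
        ((Nat.factorial s : ℝ) * (Nat.factorial (N - s) : ℝ)) := by
      rw [Nat.choose_eq_factorial_div_factorial hs]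
      rw [Nat.cast_div (Nat.factorial_mul_factorial_dvd_factorial hs)
        (by positivity)]
      push_cast; ring
    rw [hchoose, neg_pow, one_pow, pow_add]
    have f1 : (Nat.factorial s : ℝ) ≠ 0 := by positivity
    have f2 : (Nat.factorial (N - s) : ℝ) ≠ 0 := by positivity
    have f3 : (Nat.factorial N : ℝ) ≠ 0 := by positivity
    field_simp
    ring
  rw [Finset.sum_congr rfl hterm, ← Finset.mul_sum, ← Commute.add_pow (Commute.all _ _)]
  have hp1 : ((p - 1 : ℕ) : ℝ) = (p : ℝ) - 1 := by
    rw [Nat.cast_sub hp]; norm_num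
  have hKN : (-1 : ℝ) ^ K * (-1 : ℝ) ^ N = (-1 : ℝ) ^ n := by
    rw [← pow_add]; congr 1; omega
  have : (-(p : ℝ) + 1) ^ N = (-1 : ℝ) ^ N * ((p - 1 : ℕ) : ℝ) ^ N := by
    rw [hp1, ← neg_pow, neg_sub]; ring_nf
  rw [this]
  have f3 : (Nat.factorial N : ℝ) ≠ 0 := by positivity
  field_simp
  rw [← hKN]
  ring
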